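/- For every i ∈ V and every W in the assignment manifold W, the similarity map S_i(W) := Exp_{W_i}( Σ_{k∈N_i} ω_{ik} Exp_{W_i}^{-1}(L_k(W_k)) ) can equivalently be expressed using the barycenter 1_{S_n} = (1/n)1_n as S_i(W) = exp_{1_{S_n}}( Σ_{k∈N_i} ω_{ik} ( exp_{1_{S_n}}^{-1}(W_k) − (1/ρ) D_k ) ). -/
import Mathlib


/-- The exponential map `Exp_p(v) = p e^{v/p} / ⟨p, e^{v/p}⟩` of the e-connection. -/
noncomputable def simplexExp {n : ℕ} (p v : Fin n → ℝ) : Fin n → ℝ :=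
  fun j => p j * Real.exp (v j / p j) / ∑ k, p k * Real.exp (v k / p k)

/-- The replicator operator `R_p a = Diag(p) a − p ⟨p, a⟩`. -/
def replicator {n : ℕ} (p a : Fin n → ℝ) : Fin n → ℝ :=
  fun j => p j * a j - p j * ∑ k, p k * a k

/-- The inverse exponential map `Exp_p^{-1}(q) = R_p log(q / p)`. -/
noncomputable def simplexExpInv {n : ℕ} (p q : Fin n → ℝ) : Fin n → ℝ :=
  replicator p fun j => Real.log (q j / p j)

/-- The lifting map `exp_p(z) = p e^z / ⟨p, e^z⟩`. -/
noncomputable def softExp {n : ℕ} (p z : Fin n → ℝ) : Fin n → ℝ :=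
  fun j => p j * Real.exp (z j) / ∑ k, p k * Real.exp (z k)

/-- The orthogonal projection `Π_n v = v − (⟨1, v⟩ / n) 1` onto the tangent space `T_n`. -/
noncomputable def projT {n : ℕ} (v : Fin n → ℝ) : Fin n → ℝ :=
  fun j => v j - (∑ k, v k) / n

/-- The inverse lifting map `exp_p^{-1}(q) = Π_n log(q / p)`. -/
noncomputable def softExpInv {n : ℕ} (p q : Fin n → ℝ) : Fin n → ℝ :=
  projT fun j => Real.log (q j / p j)

/-- The likelihood vector `L_k(W_k) = W_k e^{−D_k/ρ} / ⟨W_k, e^{−D_k/ρ}⟩`. -/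
noncomputable def likelihoodVec {n : ℕ} (ρ : ℝ) (D W : Fin n → ℝ) : Fin n → ℝ :=
  fun j => W j * Real.exp (-D j / ρ) / ∑ k, W k * Real.exp (-D k / ρ)

/-- The barycenter `1_{S_n} = (1/n) 1_n` of the simplex. -/
noncomputable def bary (n : ℕ) : Fin n → ℝ := fun _ => 1 / n

lemma normalize_congr {n : ℕ} (c : ℝ) (hc : c ≠ 0) (f g : Fin n → ℝ)
    (h : ∀ j, f j = c * g j) :
    (fun j => f j / ∑ k, f k) = fun j => g j / ∑ k, g k := by
  funext j
  simp only [h]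
  rw [← Finset.mul_sum, mul_div_mul_left _ _ hc]

/-- **Barycentric expression of the similarity map.** For every `i ∈ V` and every `W` in the
assignment manifold, `S_i(W) = Exp_{W_i}( Σ_{k ∈ N_i} ω_{ik} Exp_{W_i}^{-1}(L_k(W_k)) )`
can equivalently be expressed as
`S_i(W) = exp_{1_{S_n}}( Σ_{k ∈ N_i} ω_{ik}( exp_{1_{S_n}}^{-1}(W_k) − (1/ρ) D_k ) )`. -/
theorem similarity_map_barycentric_form
    (m n : ℕ) (hn : 0 < n)
    -- neighborhoods N_i containing i
    (nbh : Fin m → Finset (Fin m)) (hself : ∀ i, i ∈ nbh i)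
    -- positive weights summing to one over each neighborhood
    (ω : Fin m → Fin m → ℝ)
    (hω : ∀ i, ∀ k ∈ nbh i, 0 < ω i k)
    (hωsum : ∀ i, ∑ k ∈ nbh i, ω i k = 1)
    -- W in the assignment manifold: rows are strictly positive probability vectors
    (W : Fin m → Fin n → ℝ)
    (hW : ∀ i j, 0 < W i j) (hWsum : ∀ i, ∑ j, W i j = 1)
    -- distance matrix and scaling parameter
    (D : Fin m → Fin n → ℝ) (ρ : ℝ) (hρ : 0 < ρ)
    (i : Fin m) :
    simplexExp (W i) (∑ k ∈ nbh i, ω i k • simplexExpInv (W i) (likelihoodVec ρ (D k) (W k)))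
      = softExp (bary n)
          (∑ k ∈ nbh i, ω i k • (softExpInv (bary n) (W k) - (1 / ρ) • D k)) := by
  have hnem : Nonempty (Fin n) := ⟨⟨0, hn⟩⟩
  have hnR : (0:ℝ) < n := by exact_mod_cast hn
  have hTpos : ∀ k : Fin m, 0 < ∑ l, W k l * Real.exp (-D k l / ρ) := fun k =>
    Finset.sum_pos (fun l _ => mul_pos (hW k l) (Real.exp_pos _)) Finset.univ_nonempty
  have hLpos : ∀ k j, 0 < likelihoodVec ρ (D k) (W k) j := fun k j =>
    div_pos (mul_pos (hW k j) (Real.exp_pos _)) (hTpos k)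
  have hlogL : ∀ k j, Real.log (likelihoodVec ρ (D k) (W k) j)
      = Real.log (W k j) - D k j / ρ - Real.log (∑ l, W k l * Real.exp (-D k l / ρ)) := by
    intro k j
    unfold likelihoodVec
    rw [Real.log_div (ne_of_gt (mul_pos (hW k j) (Real.exp_pos _))) (ne_of_gt (hTpos k)),
        Real.log_mul (ne_of_gt (hW k j)) (Real.exp_ne_zero _), Real.log_exp]
    ring
  -- the common "unnormalized" vector
  set F : Fin n → ℝ := fun j => ∑ k ∈ nbh i, ω i k * (Real.log (W k j) - D k j / ρ) with hFdef
  set S : Fin m → ℝ :=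
    fun k => ∑ l, W i l * Real.log (likelihoodVec ρ (D k) (W k) l / W i l) with hSdef
  set c1 : ℝ := ∑ k ∈ nbh i, ω i k *
      (-(Real.log (∑ l, W k l * Real.exp (-D k l / ρ))) - S k) with hc1
  have hv : ∀ j, (∑ k ∈ nbh i, ω i k • simplexExpInv (W i) (likelihoodVec ρ (D k) (W k))) j
      = W i j * (F j + c1 - Real.log (W i j)) := by
    intro j
    rw [Finset.sum_apply]
    have h2 : ∀ k ∈ nbh i,
        (ω i k • simplexExpInv (W i) (likelihoodVec ρ (D k) (W k))) j
        = W i j * (ω i k * ((Real.log (W k j) - D k j / ρ)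
            + (-(Real.log (∑ l, W k l * Real.exp (-D k l / ρ))) - S k))
            - ω i k * Real.log (W i j)) := by
      intro k _
      simp only [Pi.smul_apply, smul_eq_mul, simplexExpInv, replicator, hSdef]
      rw [Real.log_div (ne_of_gt (hLpos k j)) (ne_of_gt (hW i j)), hlogL k j]
      ring
    rw [Finset.sum_congr rfl h2, ← Finset.mul_sum]
    congr 1
    rw [Finset.sum_sub_distrib, ← Finset.sum_mul, hωsum i, one_mul]
    congr 1
    simp only [mul_add]
    rw [Finset.sum_add_distrib]
  have hnum : ∀ j, W i j * Real.exp
        ((∑ k ∈ nbh i, ω i k • simplexExpInv (W i) (likelihoodVec ρ (D k) (W k))) j / W i j)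
      = Real.exp c1 * Real.exp (F j) := by
    intro j
    rw [hv j, mul_div_cancel_left₀ _ (ne_of_gt (hW i j)), Real.exp_sub, Real.exp_add,
        Real.exp_log (hW i j), mul_comm (W i j), div_mul_cancel₀ _ (ne_of_gt (hW i j)),
        mul_comm]
  have hLHS : simplexExp (W i)
        (∑ k ∈ nbh i, ω i k • simplexExpInv (W i) (likelihoodVec ρ (D k) (W k)))
      = fun j => Real.exp (F j) / ∑ k, Real.exp (F k) := by
    unfold simplexExp
    exact normalize_congr (Real.exp c1) (Real.exp_ne_zero _) _ _ hnum
  -- right-hand side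
  set B : Fin m → ℝ := fun k => (∑ l, Real.log (W k l / bary n l)) / n with hBdef
  set c2 : ℝ := ∑ k ∈ nbh i, ω i k * (Real.log n - B k) with hc2
  have hbary : ∀ j : Fin n, bary n j = 1 / n := fun _ => rfl
  have hlogb : ∀ (k : Fin m) (j : Fin n), Real.log (W k j / bary n j)
      = Real.log (W k j) + Real.log n := by
    intro k j
    rw [hbary, one_div, Real.log_div (ne_of_gt (hW k j)) (inv_ne_zero (ne_of_gt hnR)),
        Real.log_inv, sub_neg_eq_add]
  have hz : ∀ j, (∑ k ∈ nbh i, ω i k • (softExpInv (bary n) (W k) - (1 / ρ) • D k)) j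
      = F j + c2 := by
    intro j
    rw [Finset.sum_apply]
    have h2 : ∀ k ∈ nbh i,
        (ω i k • (softExpInv (bary n) (W k) - (1 / ρ) • D k)) j
        = ω i k * (Real.log (W k j) - D k j / ρ) + ω i k * (Real.log n - B k) := by
      intro k _
      simp only [Pi.smul_apply, Pi.sub_apply, smul_eq_mul, softExpInv, projT, hBdef]
      rw [hlogb k j]
      ring
    rw [Finset.sum_congr rfl h2, Finset.sum_add_distrib]
  have hnum2 : ∀ j, bary n j * Real.exp
        ((∑ k ∈ nbh i, ω i k • (softExpInv (bary n) (W k) - (1 / ρ) • D k)) j)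
      = (Real.exp c2 / n) * Real.exp (F j) := by
    intro j
    rw [hz j, Real.exp_add, hbary]
    ring
  have hRHS : softExp (bary n)
        (∑ k ∈ nbh i, ω i k • (softExpInv (bary n) (W k) - (1 / ρ) • D k))
      = fun j => Real.exp (F j) / ∑ k, Real.exp (F k) := by
    unfold softExp
    exact normalize_congr (Real.exp c2 / n)
      (div_ne_zero (Real.exp_ne_zero _) (ne_of_gt hnR)) _ _ hnum2
  rw [hLHS, hRHS]
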